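/- arXiv:2107.04102 — 10 statements merged into one kernel-verified Lean document; each statement's English description precedes it below -/
import Mathlib

section
/- Let R ⊆ S be a ring extension of commutative rings and let T, T' be intermediate rings (R ⊆ T, T' ⊆ S). Assume that MSupp_R(S/T) ∩ MSupp_R(T/R) = ∅, that MSupp_R(T'/R) = MSupp_R(T/R), and that MSupp_R(S/T') = MSupp_R(S/T). Then T = T'. -/
variable {R S : Type*} [CommRing R] [CommRing S] [Algebra R S]

/-- For intermediate rings `A ≤ B` of the extension `R ⊆ S`, `MSupp A B` is the set of
maximal ideals `M` of `R` at which the localization of the `R`-module `B/A` is nonzero: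
the class of `x ∈ B` is nonzero in `(B/A)_M` iff `s • x ∉ A` for all `s ∉ M`. -/
def MSupp (A B : Subalgebra R S) : Set (Ideal R) :=
  {M | M.IsMaximal ∧ ∃ x ∈ B, ∀ s : R, s ∉ M → s • x ∉ A}

/-- If `R ⊆ S` splits at `T` (the maximal supports of `T/R` and `S/T` are disjoint), then `T`
is the unique intermediate ring with maximal supports `MSupp(T/R)` and `MSupp(S/T)`. -/
theorem eq_of_msupp_eq (T T' : Subalgebra R S)
    (hdisj : MSupp T (⊤ : Subalgebra R S) ∩ MSupp (⊥ : Subalgebra R S) T = ∅)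
    (h1 : MSupp (⊥ : Subalgebra R S) T' = MSupp (⊥ : Subalgebra R S) T)
    (h2 : MSupp T' (⊤ : Subalgebra R S) = MSupp T (⊤ : Subalgebra R S)) :
    T = T' := by
  have key : ∀ (A : Subalgebra R S) (x : S), x ∉ A →
      ∃ M : Ideal R, M.IsMaximal ∧ ∀ s : R, s ∉ M → s • x ∉ A := by
    intro A x hx
    let I : Ideal R :=
      { carrier := {s | s • x ∈ A}
        add_mem' := fun ha hb => by
          simpa [add_smul] using add_mem ha hb
        zero_mem' := by simpa using A.zero_mem
        smul_mem' := fun r s hs => by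
          simp only [Set.mem_setOf_eq, smul_eq_mul, mul_smul]
          exact A.smul_mem hs r }
    have hI : I ≠ ⊤ := by
      intro h
      have h1 : (1 : R) ∈ I := h ▸ Submodule.mem_top
      have h2 : (1 : R) • x ∈ A := h1
      rw [one_smul] at h2
      exact hx h2
    obtain ⟨M, hM, hIM⟩ := I.exists_le_maximal hI
    exact ⟨M, hM, fun s hs hsx => hs (hIM hsx)⟩
  apply le_antisymm
  · intro x hx
    by_contra hx'
    obtain ⟨M, hM, hMs⟩ := key T' x hx'
    have hMem : M ∈ MSupp T' (⊤ : Subalgebra R S) := ⟨hM, x, trivial, hMs⟩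
    rw [h2] at hMem
    have hMem2 : M ∈ MSupp (⊥ : Subalgebra R S) T :=
      ⟨hM, x, hx, fun s hs hb => hMs s hs ((bot_le : (⊥ : Subalgebra R S) ≤ T') hb)⟩
    exact Set.eq_empty_iff_forall_notMem.mp hdisj M ⟨hMem, hMem2⟩
  · intro x hx
    by_contra hx'
    obtain ⟨M, hM, hMs⟩ := key T x hx'
    have hMem : M ∈ MSupp T (⊤ : Subalgebra R S) := ⟨hM, x, trivial, hMs⟩
    have hMem2 : M ∈ MSupp (⊥ : Subalgebra R S) T' :=
      ⟨hM, x, hx, fun s hs hb => hMs s hs ((bot_le : (⊥ : Subalgebra R S) ≤ T) hb)⟩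
    rw [h1] at hMem2
    exact Set.eq_empty_iff_forall_notMem.mp hdisj M ⟨hMem, hMem2⟩
end

section
/- Let R ⊆ S be a ring extension of commutative rings that splits at an intermediate ring T (i.e., MSupp_R(T/R) ∩ MSupp_R(S/T) = ∅), and let T° be the complement of T (so T ∩ T° = R and T·T° = S, with T°_M = R_M for M ∈ MSupp_R(T/R) and T°_M = S_M otherwise). Then for any intermediate rings U, V with R ⊆ U, V ⊆ T°, the equality U·T = V·T implies U = V. -/
variable {R S : Type*} [CommRing R] [CommRing S] [Algebra R S]

theorem cancel_sup_le (T T' : Subalgebra R S)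
    (hR : ∀ M ∈ MSupp (⊥ : Subalgebra R S) T, ∀ x ∈ T', ∃ s : R, s ∉ M ∧
      s • x ∈ (⊥ : Subalgebra R S))
    (U V : Subalgebra R S) (hU : U ≤ T')
    (h : U ⊔ T ≤ V ⊔ T) : U ≤ V := by
  intro x hx
  -- the ideal of denominators
  let I : Ideal R :=
    { carrier := {s : R | s • x ∈ V}
      add_mem' := fun {a b} ha hb => by
        simp only [Set.mem_setOf_eq, add_smul] at *
        exact add_mem ha hb
      zero_mem' := by simp only [Set.mem_setOf_eq, zero_smul]; exact zero_mem V
      smul_mem' := fun c a ha => by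
        simp only [Set.mem_setOf_eq, smul_eq_mul, mul_smul] at *
        exact Subalgebra.smul_mem V ha c }
  by_cases hI : I = ⊤
  · have h1 : (1 : R) ∈ I := hI ▸ Submodule.mem_top
    have h2 : (1 : R) • x ∈ V := h1
    simpa using h2
  · obtain ⟨M, hM, hIM⟩ := Ideal.exists_le_maximal I hI
    exfalso
    by_cases hMT : M ∈ MSupp (⊥ : Subalgebra R S) T
    · obtain ⟨s, hs, hsx⟩ := hR M hMT x (hU hx)
      exact hs (hIM ((bot_le : ⊥ ≤ V) hsx))
    · -- T is locally trivial at M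
      have hT : ∀ t ∈ T, ∃ s : R, s ∉ M ∧ s • t ∈ (⊥ : Subalgebra R S) := by
        intro t ht
        by_contra hc
        push_neg at hc
        exact hMT ⟨hM, t, ht, fun s hs => hc s hs⟩
      have hxsup : x ∈ V ⊔ T := h (le_sup_left (a := U) (b := T) hx)
      rw [← Algebra.adjoin_eq V, ← Algebra.adjoin_eq T, ← Algebra.adjoin_union] at hxsup
      have key : ∃ s : R, s ∉ M ∧ s • x ∈ V := by
        refine Algebra.adjoin_induction (p := fun y _ => ∃ s : R, s ∉ M ∧ s • y ∈ V)
          ?_ ?_ ?_ ?_ hxsup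
        · rintro y (hy | hy)
          · exact ⟨1, M.primeCompl.one_mem, by simpa using hy⟩
          · obtain ⟨s, hs, hsy⟩ := hT y hy
            exact ⟨s, hs, (bot_le : ⊥ ≤ V) hsy⟩
        · exact fun r => ⟨1, M.primeCompl.one_mem, by simpa using algebraMap_mem V r⟩
        · rintro y z _ _ ⟨s, hs, hsy⟩ ⟨t, ht, htz⟩
          refine ⟨s * t, fun hst => (hM.isPrime.mem_or_mem hst).elim hs ht, ?_⟩
          have : (s * t) • (y + z) = t • (s • y) + s • (t • z) := by
            simp only [smul_add, smul_smul, mul_comm]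
          rw [this]
          exact add_mem (Subalgebra.smul_mem V hsy t) (Subalgebra.smul_mem V htz s)
        · rintro y z _ _ ⟨s, hs, hsy⟩ ⟨t, ht, htz⟩
          refine ⟨s * t, fun hst => (hM.isPrime.mem_or_mem hst).elim hs ht, ?_⟩
          have : (s * t) • (y * z) = (s • y) * (t • z) := by
            rw [smul_mul_smul_comm]
          rw [this]
          exact mul_mem hsy htz
      obtain ⟨s, hs, hsx⟩ := key
      exact hs (hIM hsx)

/-- If `R ⊆ S` splits at `T` with complement `T'`, then for `U, V ∈ [R, T']`,
`U·T = V·T` implies `U = V`. -/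
theorem cancel_sup (T T' : Subalgebra R S)
    (hsplit : MSupp (⊥ : Subalgebra R S) T ∩ MSupp T (⊤ : Subalgebra R S) = ∅)
    (hR : ∀ M ∈ MSupp (⊥ : Subalgebra R S) T, ∀ x ∈ T', ∃ s : R, s ∉ M ∧
      s • x ∈ (⊥ : Subalgebra R S))
    (hS : ∀ M : Ideal R, M.IsMaximal → M ∉ MSupp (⊥ : Subalgebra R S) T →
      ∀ x : S, ∃ s : R, s ∉ M ∧ s • x ∈ T')
    (U V : Subalgebra R S) (hU : U ≤ T') (hV : V ≤ T')
    (h : U ⊔ T = V ⊔ T) : U = V :=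
  le_antisymm (cancel_sup_le T T' hR U V hU h.le)
    (cancel_sup_le T T' hR V U hV h.ge)
end

section
/- Let R ⊆ S be a ring extension that splits at an intermediate ring T (i.e., MSupp_R(T/R) ∩ MSupp_R(S/T) = ∅), with complement T° (satisfying T°_M = R_M for M ∈ MSupp_R(T/R) and T°_M = S_M for all other maximal ideals M of R). Then T° = { x ∈ S : T ∩ Rx ⊆ R }, where Rx is the cyclic R-submodule of S generated by x. -/
variable {R S : Type*} [CommRing R] [CommRing S] [Algebra R S]

lemma local_mem {A : Submodule R S} {y : S}
    (h : ∀ M : Ideal R, M.IsMaximal → ∃ s : R, s ∉ M ∧ s • y ∈ A) : y ∈ A := by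
  let I : Ideal R := Submodule.comap (LinearMap.toSpanSingleton R S y) A
  have hI : I = ⊤ := by
    by_contra hI
    obtain ⟨M, hM, hle⟩ := Ideal.exists_le_maximal I hI
    obtain ⟨s, hs, hsy⟩ := h M hM
    exact hs (hle hsy)
  have h1 : (1 : R) ∈ I := hI ▸ trivial
  simpa [I] using h1

/-- If `R ⊆ S` splits at `T` with complement `T'`, then
`T' = { x ∈ S : T ∩ Rx ⊆ R }`. -/
theorem complement_eq (T T' : Subalgebra R S)
    (hsplit : MSupp (⊥ : Subalgebra R S) T ∩ MSupp T (⊤ : Subalgebra R S) = ∅)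
    (hR : ∀ M ∈ MSupp (⊥ : Subalgebra R S) T, ∀ x ∈ T', ∃ s : R, s ∉ M ∧
      s • x ∈ (⊥ : Subalgebra R S))
    (hS : ∀ M : Ideal R, M.IsMaximal → M ∉ MSupp (⊥ : Subalgebra R S) T →
      ∀ x : S, ∃ s : R, s ∉ M ∧ s • x ∈ T') :
    ∀ x : S, x ∈ T' ↔
      Subalgebra.toSubmodule T ⊓ Submodule.span R {x} ≤
        Subalgebra.toSubmodule (⊥ : Subalgebra R S) := by
  intro x
  constructor
  · intro hx y hy
    obtain ⟨hyT, hyx⟩ := Submodule.mem_inf.mp hy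
    refine local_mem (fun M hM => ?_)
    by_cases hMT : M ∈ MSupp (⊥ : Subalgebra R S) T
    · obtain ⟨s, hs, hsx⟩ := hR M hMT x hx
      obtain ⟨r, hr⟩ := Submodule.mem_span_singleton.mp hyx
      refine ⟨s, hs, ?_⟩
      have hy' : s • y = r • (s • x) := by rw [← hr, smul_comm]
      rw [hy']
      exact Submodule.smul_mem _ r hsx
    · have h2 : ∀ z ∈ T, ∃ s : R, s ∉ M ∧ s • z ∈ (⊥ : Subalgebra R S) := by
        by_contra h
        push_neg at h
        obtain ⟨z, hz, hz2⟩ := h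
        exact hMT ⟨hM, z, hz, hz2⟩
      exact h2 y hyT
  · intro hle
    have hmem : x ∈ Subalgebra.toSubmodule T' := by
      refine local_mem (fun M hM => ?_)
      by_cases hMT : M ∈ MSupp (⊥ : Subalgebra R S) T
      · have hMnot : M ∉ MSupp T (⊤ : Subalgebra R S) := fun h =>
          Set.eq_empty_iff_forall_notMem.mp hsplit M ⟨hMT, h⟩
        have h2 : ∀ z : S, ∃ s : R, s ∉ M ∧ s • z ∈ T := by
          by_contra h
          push_neg at h
          obtain ⟨z, hz⟩ := h
          exact hMnot ⟨hM, z, Algebra.mem_top, hz⟩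
        obtain ⟨s, hs, hsT⟩ := h2 x
        refine ⟨s, hs, ?_⟩
        have hb : s • x ∈ (⊥ : Subalgebra R S) :=
          hle (Submodule.mem_inf.mpr ⟨hsT, Submodule.mem_span_singleton.mpr ⟨s, rfl⟩⟩)
        exact (bot_le : (⊥ : Subalgebra R S) ≤ T') hb
      · exact hS M hM hMT x
    exact hmem
end

section
/- Let R ⊆ S be a ring extension that splits at an intermediate ring T (MSupp_R(T/R) ∩ MSupp_R(S/T) = ∅), with complement T°. Then T° is the largest intermediate ring V of R ⊆ S satisfying V ∩ T = R; that is, T° ∩ T = R, and every intermediate ring V with V ∩ T = R is contained in T°. -/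
variable {R S : Type*} [CommRing R] [CommRing S] [Algebra R S]

/-- The ideal of `s : R` with `s • x ∈ A`. -/
def colonIdeal (A : Subalgebra R S) (x : S) : Ideal R where
  carrier := {s | s • x ∈ A}
  add_mem' := fun {a b} ha hb => by simpa [add_smul] using A.add_mem ha hb
  zero_mem' := by simp [zero_smul]
  smul_mem' := fun c s hs => by
    simpa [mul_smul, Algebra.smul_def, mul_assoc] using
      A.mul_mem (A.algebraMap_mem c) hs

lemma mem_of_forall_max (A : Subalgebra R S) (x : S)
    (h : ∀ M : Ideal R, M.IsMaximal → ∃ s : R, s ∉ M ∧ s • x ∈ A) : x ∈ A := by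
  have htop : colonIdeal A x = ⊤ := by
    by_contra hne
    obtain ⟨M, hM, hle⟩ := Ideal.exists_le_maximal _ hne
    obtain ⟨s, hsM, hsA⟩ := h M hM
    exact hsM (hle hsA)
  have h1 : (1 : R) ∈ colonIdeal A x := htop ▸ Submodule.mem_top
  simpa [colonIdeal] using h1

/-- If `R ⊆ S` splits at `T` with complement `T'`, then `T'` is the largest intermediate
ring `V` with `V ∩ T = R`. -/
theorem complement_largest (T T' : Subalgebra R S)
    (hsplit : MSupp (⊥ : Subalgebra R S) T ∩ MSupp T (⊤ : Subalgebra R S) = ∅)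
    (hR : ∀ M ∈ MSupp (⊥ : Subalgebra R S) T, ∀ x ∈ T', ∃ s : R, s ∉ M ∧
      s • x ∈ (⊥ : Subalgebra R S))
    (hS : ∀ M : Ideal R, M.IsMaximal → M ∉ MSupp (⊥ : Subalgebra R S) T →
      ∀ x : S, ∃ s : R, s ∉ M ∧ s • x ∈ T') :
    T' ⊓ T = ⊥ ∧ ∀ V : Subalgebra R S, V ⊓ T = ⊥ → V ≤ T' := by
  constructor
  · refine le_antisymm (fun x hx => ?_) bot_le
    obtain ⟨hx1, hx2⟩ : x ∈ T' ∧ x ∈ T := hx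
    refine mem_of_forall_max _ x fun M hM => ?_
    by_cases hMs : M ∈ MSupp (⊥ : Subalgebra R S) T
    · exact hR M hMs x hx1
    · have : ¬ (M.IsMaximal ∧ ∃ y ∈ T, ∀ s : R, s ∉ M → s • y ∉ (⊥ : Subalgebra R S)) := hMs
      push_neg at this
      obtain ⟨s, hsM, hs⟩ := this hM x hx2
      exact ⟨s, hsM, hs⟩
  · intro V hV x hx
    refine mem_of_forall_max _ x fun M hM => ?_
    by_cases hMs : M ∈ MSupp (⊥ : Subalgebra R S) T
    · have hMT : M ∉ MSupp T (⊤ : Subalgebra R S) := by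
        intro hmem
        have : M ∈ MSupp (⊥ : Subalgebra R S) T ∩ MSupp T (⊤ : Subalgebra R S) := ⟨hMs, hmem⟩
        rw [hsplit] at this
        exact this
      have : ¬ (M.IsMaximal ∧ ∃ y ∈ (⊤ : Subalgebra R S), ∀ s : R, s ∉ M → s • y ∉ T) := hMT
      push_neg at this
      obtain ⟨s, hsM, hs⟩ := this hM x (by trivial)
      refine ⟨s, hsM, ?_⟩
      have hmem : s • x ∈ V ⊓ T := ⟨V.smul_mem hx s, hs⟩
      rw [hV] at hmem
      exact (bot_le : (⊥ : Subalgebra R S) ≤ T') hmem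
    · exact hS M hM hMs x
end

section
/- Let R ⊆ S be a ring extension with conductor I := (R : \overline{R}) of R in its integral closure \overline{R} in S, and assume that R/I is an Artinian ring with maximal ideals M₁/I, …, M_n/I. For every y ∈ S the following holds: y belongs to ⋂_{i=1}^{n} R_{[M_i]} if and only if y belongs to R_{[1+I]} := { x ∈ S : (1+a)x ∈ R for some a ∈ I }. -/
variable {R S : Type*} [CommRing R] [CommRing S] [Algebra R S]

/-- Let `I = (R : R̄)` be the conductor of `R` in its integral closure `R̄` in `S`, with
`R/I` Artinian with maximal ideals `M₁/I, …, Mₙ/I`. Then for `y ∈ S`: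
`y ∈ ⋂ R_{[Mᵢ]}` iff `y ∈ R_{[1+I]}`. -/
theorem mem_inter_iff_mem_one_add (I : Ideal R)
    (hI : I = Submodule.colon
      (Subalgebra.toSubmodule (⊥ : Subalgebra R S))
      (Subalgebra.toSubmodule (integralClosure R S)))
    (hArt : IsArtinianRing (R ⧸ I))
    (n : ℕ) (M : Fin n → Ideal R)
    (hmax : ∀ i, (M i).IsMaximal) (hle : ∀ i, I ≤ M i)
    (hall : ∀ N : Ideal R, N.IsMaximal → I ≤ N → ∃ i, N = M i)
    (y : S) :
    (∀ i, ∃ s : R, s ∉ M i ∧ s • y ∈ (⊥ : Subalgebra R S)) ↔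
      ∃ a ∈ I, (1 + a) • y ∈ (⊥ : Subalgebra R S) := by
  constructor
  · intro h
    choose s hs hsy using h
    -- the ideal of elements r with r • y ∈ R
    set T : Ideal R := (Subalgebra.toSubmodule (⊥ : Subalgebra R S)).comap
      (LinearMap.toSpanSingleton R S y) with hT
    have hsT : ∀ i, s i ∈ T := fun i => by
      simpa [hT, LinearMap.toSpanSingleton_apply] using hsy i
    have htop : Ideal.span (Set.range s) ⊔ I = ⊤ := by
      by_contra hne
      obtain ⟨N, hN, hle'⟩ := Ideal.exists_le_maximal _ hne
      obtain ⟨i, rfl⟩ := hall N hN (le_trans le_sup_right hle')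
      exact hs i (hle' (Ideal.mem_sup_left (Ideal.subset_span ⟨i, rfl⟩)))
    have h1 : (1 : R) ∈ Ideal.span (Set.range s) ⊔ I := htop ▸ Submodule.mem_top
    obtain ⟨j, hj, m, hm, hjm⟩ := Submodule.mem_sup.mp h1
    refine ⟨-m, I.neg_mem hm, ?_⟩
    have hjT : j ∈ T := by
      refine Ideal.span_le.mpr ?_ hj
      rintro _ ⟨i, rfl⟩
      exact hsT i
    have : (1 : R) + -m = j := by rw [← hjm]; ring
    rw [this]
    simpa [hT, LinearMap.toSpanSingleton_apply] using hjT
  · rintro ⟨a, ha, hay⟩ i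
    refine ⟨1 + a, fun hmem => (hmax i).ne_top ((Ideal.eq_top_iff_one _).mpr ?_), hay⟩
    simpa using (M i).sub_mem hmem (hle i ha)
end

section
/- Let R ⊆ S be a ring extension which is a flat epimorphism in the category of commutative rings (i.e., the inclusion R → S is a flat ring epimorphism). Then for every prime ideal P of R: R_P ≠ S_P (i.e., P lies in the support of the R-module S/R) if and only if PS = S. Moreover, if PS ≠ S then the canonical map R_P → S_P is an isomorphism. -/
open TensorProduct

universe u

variable {R S : Type u} [CommRing R] [CommRing S] [Algebra R S]

private lemma tensor_subsing {A M N : Type*} [CommRing A] [AddCommGroup M] [AddCommGroup N]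
    [Module A M] [Module A N] [Subsingleton N] : Subsingleton (M ⊗[A] N) := by
  have h0 : ∀ x : M ⊗[A] N, x = 0 := by
    intro x
    induction x using TensorProduct.induction_on with
    | zero => rfl
    | tmul m n => rw [Subsingleton.elim n 0, tmul_zero]
    | add x y hx hy => rw [hx, hy, add_zero]
  exact ⟨fun a b => by rw [h0 a, h0 b]⟩

private lemma epi_tmul (hepi : ∀ (T : Type u) [CommRing T] (g h : S →+* T),
      g.comp (algebraMap R S) = h.comp (algebraMap R S) → g = h) (s : S) :
    s ⊗ₜ[R] (1 : S) = (1 : S) ⊗ₜ[R] s := by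
  have := hepi (S ⊗[R] S) (Algebra.TensorProduct.includeLeftRingHom (R := R))
    (Algebra.TensorProduct.includeRight (R := R) (A := S)).toRingHom (by
      ext r
      show (algebraMap R S r) ⊗ₜ[R] (1 : S) = (1 : S) ⊗ₜ[R] (algebraMap R S r)
      simp only [Algebra.algebraMap_eq_smul_one, smul_tmul])
  exact RingHom.congr_fun this s

private lemma main_aux (hinj : Function.Injective (algebraMap R S)) [Module.Flat R S]
    (htmul : ∀ s : S, s ⊗ₜ[R] (1 : S) = (1 : S) ⊗ₜ[R] s)
    (P : Ideal R) (hP : P.IsPrime) (hne : Ideal.map (algebraMap R S) P ≠ ⊤) (x : S) :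
    ∃ s : R, s ∉ P ∧ s • x ∈ (⊥ : Subalgebra R S) := by
  classical
  set K : Submodule R S := LinearMap.range (Algebra.linearMap R S) with hK
  set C := S ⧸ K
  -- S ⊗ C is trivial
  have hπ1 : K.mkQ (1 : S) = 0 :=
    (Submodule.Quotient.mk_eq_zero K).mpr ⟨1, by simp⟩
  have h1 : ∀ s t : S, s ⊗ₜ[R] (K.mkQ t) = (0 : S ⊗[R] C) := by
    intro s t
    have hst : s ⊗ₜ[R] t = (s * t) ⊗ₜ[R] (1 : S) := by
      calc s ⊗ₜ[R] t = (s ⊗ₜ[R] (1 : S)) * ((1 : S) ⊗ₜ[R] t) := by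
            rw [Algebra.TensorProduct.tmul_mul_tmul, mul_one, one_mul]
        _ = (s ⊗ₜ[R] (1 : S)) * (t ⊗ₜ[R] (1 : S)) := by rw [htmul t]
        _ = (s * t) ⊗ₜ[R] (1 : S) := by
            rw [Algebra.TensorProduct.tmul_mul_tmul, mul_one]
    calc s ⊗ₜ[R] (K.mkQ t) = (LinearMap.lTensor S K.mkQ) (s ⊗ₜ[R] t) := rfl
      _ = (LinearMap.lTensor S K.mkQ) ((s * t) ⊗ₜ[R] (1 : S)) := by rw [hst]
      _ = (s * t) ⊗ₜ[R] (K.mkQ 1) := rfl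
      _ = 0 := by rw [hπ1, tmul_zero]
  haveI hs1 : Subsingleton (S ⊗[R] C) := by
    have h0 : ∀ z : S ⊗[R] C, z = 0 := by
      intro z
      induction z using TensorProduct.induction_on with
      | zero => rfl
      | tmul s c =>
          obtain ⟨t, rfl⟩ := Submodule.mkQ_surjective K c
          exact h1 s t
      | add a b ha hb => rw [ha, hb, add_zero]
    exact ⟨fun a b => by rw [h0 a, h0 b]⟩
  -- a maximal ideal over the image of P
  obtain ⟨Q, hQmax, hQ⟩ := Ideal.exists_le_maximal _ hne
  haveI hQp : Q.IsPrime := hQmax.isPrime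
  set p' : Ideal R := Q.comap (algebraMap R S) with hp'
  haveI : p'.IsPrime := Ideal.IsPrime.comap _
  have hPp' : P ≤ p' := fun r hr => Ideal.mem_comap.mpr (hQ (Ideal.mem_map_of_mem _ hr))
  set A := Localization.AtPrime Q with hA
  set R' := Localization.AtPrime p' with hR'
  set φ : R' →+* A := Localization.localRingHom p' Q (algebraMap R S) rfl with hφ
  letI : Algebra R' A := φ.toAlgebra
  haveI : IsScalarTower R R' A := IsScalarTower.of_algebraMap_eq fun r => by
    rw [IsScalarTower.algebraMap_apply R S A]
    exact (Localization.localRingHom_to_map p' Q (algebraMap R S) rfl r).symm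
  haveI : Module.Flat R A := Module.Flat.trans R S A
  haveI := isLocalizedModule_id p'.primeCompl A R'
  haveI : Module.Flat R' A :=
    Module.Flat.of_isLocalizedModule R' p'.primeCompl (LinearMap.id : A →ₗ[R] A)
  haveI : Module.FaithfullyFlat R' A := by
    refine ⟨fun m hm heq => ?_⟩
    have hmle : m ≤ IsLocalRing.maximalIdeal R' := IsLocalRing.le_maximalIdeal hm.ne_top
    have hle : m • (⊤ : Submodule R' A) ≤ (IsLocalRing.maximalIdeal A).restrictScalars R' := by
      refine Submodule.smul_le.mpr fun r hr a _ => ?_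
      have hnr : ¬ IsUnit (φ r) := by
        intro h
        exact (IsLocalRing.mem_maximalIdeal r).mp (hmle hr) (IsLocalHom.map_nonunit r h)
      show r • a ∈ IsLocalRing.maximalIdeal A
      rw [Algebra.smul_def]
      exact Ideal.mul_mem_right a _ ((IsLocalRing.mem_maximalIdeal _).mpr hnr)
    have h1m : (1 : A) ∈ (IsLocalRing.maximalIdeal A).restrictScalars R' := by
      refine hle ?_
      rw [heq]
      trivial
    exact (IsLocalRing.maximalIdeal.isMaximal A).ne_top (Ideal.eq_top_iff_one _ |>.mpr h1m)
  -- transfer subsingletons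
  haveI hs2 : Subsingleton (A ⊗[S] (S ⊗[R] C)) := tensor_subsing
  haveI hs3 : Subsingleton (A ⊗[R] C) :=
    (TensorProduct.AlgebraTensorModule.cancelBaseChange R S S A C).symm.toEquiv.subsingleton
  set Cp := LocalizedModule p'.primeCompl C with hCp
  have hbc : IsBaseChange R' (LocalizedModule.mkLinearMap p'.primeCompl C) :=
    (isLocalizedModule_iff_isBaseChange p'.primeCompl R' _).mp inferInstance
  haveI hs4 : Subsingleton (A ⊗[R'] (R' ⊗[R] C)) :=
    (TensorProduct.AlgebraTensorModule.cancelBaseChange R R' R' A C).toEquiv.subsingleton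
  haveI hs5 : Subsingleton (A ⊗[R'] Cp) :=
    (TensorProduct.congr (LinearEquiv.refl R' A) hbc.equiv).symm.toEquiv.subsingleton
  haveI hs6 : Subsingleton Cp := by
    by_contra h
    haveI : Nontrivial Cp := not_subsingleton_iff_nontrivial.mp h
    haveI := Module.FaithfullyFlat.lTensor_nontrivial R' A Cp
    exact false_of_nontrivial_of_subsingleton (A ⊗[R'] Cp)
  -- extract the witness
  have hx : LocalizedModule.mk (K.mkQ x) (1 : p'.primeCompl) =
      LocalizedModule.mk (0 : C) (1 : p'.primeCompl) := Subsingleton.elim _ _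
  rw [LocalizedModule.mk_eq] at hx
  obtain ⟨u, hu⟩ := hx
  simp only [one_smul, smul_zero] at hu
  have hmk : K.mkQ ((u : R) • x) = 0 := by
    rw [map_smul]
    simpa [Submonoid.smul_def] using hu
  obtain ⟨r, hr⟩ := (Submodule.Quotient.mk_eq_zero K).mp hmk
  exact ⟨(u : R), fun hm => u.2 (hPp' hm), Algebra.mem_bot.mpr ⟨r, hr⟩⟩

private lemma loc_surj [Module.Flat R S] (P : Ideal R) [hP : P.IsPrime]
    (hsur : ∀ x : S, ∃ s : R, s ∉ P ∧ s • x ∈ (⊥ : Subalgebra R S)) :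
    Function.Surjective
      (IsLocalization.map
        (Localization (Submonoid.map (algebraMap R S) P.primeCompl))
        (algebraMap R S) (Submonoid.le_comap_map P.primeCompl) :
        Localization.AtPrime P →+* _) := by
  intro y
  obtain ⟨x, m, hy⟩ := IsLocalization.exists_mk'_eq (Submonoid.map (algebraMap R S) P.primeCompl) y
  obtain ⟨t, ht, htm⟩ := m.2
  obtain ⟨s, hs, hsx⟩ := hsur x
  obtain ⟨r, hr⟩ := Algebra.mem_bot.mp hsx
  have hst : s * t ∈ P.primeCompl := Submonoid.mul_mem _ hs ht
  refine ⟨IsLocalization.mk' _ r ⟨s * t, hst⟩, ?_⟩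
  rw [← hy, IsLocalization.map_mk', IsLocalization.mk'_eq_iff_eq]
  refine congrArg _ ?_
  show (m : S) * (algebraMap R S r) = (algebraMap R S (s * t)) * x
  calc (m : S) * (algebraMap R S r) = algebraMap R S t * (s • x) := by
        rw [hr, ← htm]
    _ = algebraMap R S t * (algebraMap R S s * x) := by rw [Algebra.smul_def]
    _ = (algebraMap R S (s * t)) * x := by rw [map_mul]; ring

/-- For a flat epimorphic extension `R ⊆ S` and a prime `P` of `R`: `(S/R)_P ≠ 0` iff
`PS = S`; and if `PS ≠ S` then the canonical map `R_P → S_P` is an isomorphism. -/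
theorem flat_epi_support (hinj : Function.Injective (algebraMap R S))
    [Module.Flat R S]
    (hepi : ∀ (T : Type u) [CommRing T] (g h : S →+* T),
      g.comp (algebraMap R S) = h.comp (algebraMap R S) → g = h)
    (P : Ideal R) (hP : P.IsPrime) :
    ((∃ x : S, ∀ s : R, s ∉ P → s • x ∉ (⊥ : Subalgebra R S)) ↔
      Ideal.map (algebraMap R S) P = ⊤) ∧
    (Ideal.map (algebraMap R S) P ≠ ⊤ →
      Function.Bijective
        (IsLocalization.map
          (Localization (Submonoid.map (algebraMap R S) P.primeCompl))
          (algebraMap R S)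
          (Submonoid.le_comap_map P.primeCompl) :
          Localization.AtPrime P →+* _)) := by
  haveI := hP
  have htmul := epi_tmul (R := R) (S := S) hepi
  set SP := Localization (Submonoid.map (algebraMap R S) P.primeCompl) with hSP
  set φ : Localization.AtPrime P →+* SP :=
    IsLocalization.map SP (algebraMap R S) (Submonoid.le_comap_map P.primeCompl) with hφ
  have hinjφ : Function.Injective φ :=
    IsLocalization.map_injective_of_injective P.primeCompl _ _ hinj
  have key : Ideal.map (algebraMap R S) P ≠ ⊤ → Function.Bijective φ := by
    intro hne
    exact ⟨hinjφ, loc_surj P (fun x => main_aux hinj htmul P hP hne x)⟩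
  refine ⟨⟨?_, ?_⟩, key⟩
  · intro ⟨x, hx⟩
    by_contra hne
    obtain ⟨s, hs, hsx⟩ := main_aux hinj htmul P hP hne x
    exact hx s hs hsx
  · intro htop
    by_contra hno
    push_neg at hno
    have hbij : Function.Bijective φ := ⟨hinjφ, loc_surj P hno⟩
    have hcomp : φ.comp (algebraMap R (Localization.AtPrime P)) =
        (algebraMap S SP).comp (algebraMap R S) := IsLocalization.map_comp _
    have h2 : (Ideal.map (algebraMap R (Localization.AtPrime P)) P).map φ = ⊤ := by
      rw [Ideal.map_map, hcomp, ← Ideal.map_map, htop, Ideal.map_top]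
    rw [Localization.AtPrime.map_eq_maximalIdeal] at h2
    have h3 : (1 : SP) ∈ (IsLocalRing.maximalIdeal (Localization.AtPrime P)).map φ := by
      rw [h2]; trivial
    obtain ⟨a, ha, hφa⟩ := (Ideal.mem_map_iff_of_surjective φ hbij.2).mp h3
    have ha1 : a = 1 := hinjφ (by rw [hφa, map_one])
    exact (IsLocalRing.maximalIdeal.isMaximal (Localization.AtPrime P)).ne_top
      (Ideal.eq_top_iff_one _ |>.mpr (ha1 ▸ ha))
end

section
/- Let R ⊆ S be a ring extension and T an intermediate ring such that MSupp_R(T/R) ∩ MSupp_R(S/T) = ∅, with complement T° (so T°_M = R_M for M ∈ MSupp_R(T/R) and T°_M = S_M for all other maximal ideals of R). Then the map ψ₁ : [R, T°] → [T, S] defined by ψ₁(V) := V·T (the compositum inside S) is a bijection which preserves and reflects inclusion (an order isomorphism). -/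
variable {R S : Type*} [CommRing R] [CommRing S] [Algebra R S]

/-- If every element of `U` can be multiplied into `V` by a scalar outside any given
maximal ideal, then `U ≤ V`. -/
lemma le_of_local_smul (U V : Subalgebra R S)
    (h : ∀ x ∈ U, ∀ M : Ideal R, M.IsMaximal → ∃ s : R, s ∉ M ∧ s • x ∈ V) : U ≤ V := by
  intro x hx
  set I : Ideal R :=
    { carrier := {s : R | s • x ∈ V}
      add_mem' := fun {a b} ha hb => by
        simp only [Set.mem_setOf_eq, add_smul] at *
        exact V.add_mem ha hb
      zero_mem' := by simp only [Set.mem_setOf_eq, zero_smul]; exact V.zero_mem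
      smul_mem' := fun c {a} ha => by
        simp only [Set.mem_setOf_eq, smul_eq_mul, mul_smul] at *
        exact V.smul_mem ha c } with hI
  by_contra hxV
  have hne : I ≠ ⊤ := by
    intro htop
    have h1 : (1 : R) ∈ I := htop ▸ Submodule.mem_top
    simp only [hI, Submodule.mem_mk, AddSubmonoid.mem_mk, AddSubsemigroup.mem_mk,
      Set.mem_setOf_eq, one_smul] at h1
    exact hxV h1
  obtain ⟨M, hM, hle⟩ := Ideal.exists_le_maximal I hne
  obtain ⟨s, hs, hsx⟩ := h x hx M hM
  exact hs (hle hsx)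

/-- If every element of `T` can be multiplied into `V` by a scalar outside the prime `M`,
then so can every element of `V ⊔ T`. -/
lemma exists_smul_mem_of_mem_sup (V T : Subalgebra R S) (M : Ideal R) (hM : M.IsPrime)
    (hT : ∀ z ∈ T, ∃ s : R, s ∉ M ∧ s • z ∈ V) :
    ∀ y ∈ V ⊔ T, ∃ s : R, s ∉ M ∧ s • y ∈ V := by
  have h1 : (1 : R) ∉ M := by
    intro h; exact hM.ne_top (Ideal.eq_top_of_isUnit_mem M h isUnit_one)
  have hsup : (V ⊔ T : Subalgebra R S) = Algebra.adjoin R (↑V ∪ ↑T) := by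
    rw [Algebra.adjoin_union, Algebra.adjoin_eq, Algebra.adjoin_eq]
  intro y hy
  rw [hsup] at hy
  induction hy using Algebra.adjoin_induction with
  | mem z hz =>
    rcases hz with hz | hz
    · exact ⟨1, h1, by simpa using hz⟩
    · exact hT z hz
  | algebraMap r => exact ⟨1, h1, by simpa using V.algebraMap_mem r⟩
  | add a b _ _ iha ihb =>
    obtain ⟨s, hs, hsa⟩ := iha
    obtain ⟨t, ht, htb⟩ := ihb
    refine ⟨s * t, fun h => (hM.mem_or_mem h).elim hs ht, ?_⟩
    have : (s * t) • (a + b) = t • (s • a) + s • (t • b) := by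
      module
    rw [this]
    exact V.add_mem (V.smul_mem hsa t) (V.smul_mem htb s)
  | mul a b _ _ iha ihb =>
    obtain ⟨s, hs, hsa⟩ := iha
    obtain ⟨t, ht, htb⟩ := ihb
    refine ⟨s * t, fun h => (hM.mem_or_mem h).elim hs ht, ?_⟩
    have : (s * t) • (a * b) = (s • a) * (t • b) := by
      rw [smul_mul_smul_comm]
    rw [this]
    exact V.mul_mem hsa htb

/-- If `R ⊆ S` splits at `T` with complement `T'`, then `V ↦ V·T` is an
order-isomorphism from `[R, T']` onto `[T, S]`. -/
theorem sup_orderIso (T T' : Subalgebra R S)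
    (hsplit : MSupp (⊥ : Subalgebra R S) T ∩ MSupp T (⊤ : Subalgebra R S) = ∅)
    (hR : ∀ M ∈ MSupp (⊥ : Subalgebra R S) T, ∀ x ∈ T', ∃ s : R, s ∉ M ∧
      s • x ∈ (⊥ : Subalgebra R S))
    (hS : ∀ M : Ideal R, M.IsMaximal → M ∉ MSupp (⊥ : Subalgebra R S) T →
      ∀ x : S, ∃ s : R, s ∉ M ∧ s • x ∈ T') :
    (∀ U V : Subalgebra R S, U ≤ T' → V ≤ T' → U ⊔ T = V ⊔ T → U = V) ∧
    (∀ W : Subalgebra R S, T ≤ W → ∃ V : Subalgebra R S, V ≤ T' ∧ V ⊔ T = W) ∧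
    (∀ U V : Subalgebra R S, U ≤ T' → V ≤ T' → (U ≤ V ↔ U ⊔ T ≤ V ⊔ T)) := by
  -- Key: if `M ∉ MSupp ⊥ T` then `T` is locally trivial at `M`.
  have hTloc : ∀ M : Ideal R, M.IsMaximal → M ∉ MSupp (⊥ : Subalgebra R S) T →
      ∀ z ∈ T, ∃ s : R, s ∉ M ∧ s • z ∈ (⊥ : Subalgebra R S) := by
    intro M hM hMs z hz
    simp only [MSupp, Set.mem_setOf_eq, not_and, not_exists, not_forall] at hMs
    obtain ⟨s, hs, hsz⟩ := hMs hM z hz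
    exact ⟨s, hs, not_not.mp hsz⟩
  -- Key order reflection.
  have key : ∀ U V : Subalgebra R S, U ≤ T' → U ⊔ T ≤ V ⊔ T → U ≤ V := by
    intro U V hU hle
    apply le_of_local_smul
    intro x hx M hM
    by_cases hMs : M ∈ MSupp (⊥ : Subalgebra R S) T
    · obtain ⟨s, hs, hsx⟩ := hR M hMs x (hU hx)
      exact ⟨s, hs, bot_le (a := V) hsx⟩
    · have hT : ∀ z ∈ T, ∃ s : R, s ∉ M ∧ s • z ∈ V := by
        intro z hz
        obtain ⟨s, hs, hsz⟩ := hTloc M hM hMs z hz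
        exact ⟨s, hs, bot_le (a := V) hsz⟩
      exact exists_smul_mem_of_mem_sup V T M hM.isPrime hT x (hle (le_sup_left (b := T) hx))
  refine ⟨fun U V hU hV hUV => le_antisymm (key U V hU hUV.le) (key V U hV hUV.ge),
    ?_, fun U V hU hV => ⟨fun h => sup_le_sup_right h T, fun h => key U V hU h⟩⟩
  intro W hTW
  refine ⟨W ⊓ T', inf_le_right, le_antisymm (sup_le inf_le_left hTW) ?_⟩
  apply le_of_local_smul
  intro x hx M hM
  by_cases hMs : M ∈ MSupp (⊥ : Subalgebra R S) T
  · have hM2 : M ∉ MSupp T (⊤ : Subalgebra R S) := by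
      intro h
      have : M ∈ MSupp (⊥ : Subalgebra R S) T ∩ MSupp T (⊤ : Subalgebra R S) := ⟨hMs, h⟩
      rw [hsplit] at this
      exact this
    simp only [MSupp, Set.mem_setOf_eq, not_and, not_exists, not_forall] at hM2
    obtain ⟨s, hs, hsx⟩ := hM2 hM x Algebra.mem_top
    exact ⟨s, hs, le_sup_right (a := W ⊓ T') (not_not.mp hsx)⟩
  · obtain ⟨s, hs, hsx⟩ := hS M hM hMs x
    exact ⟨s, hs, le_sup_left (b := T) (⟨W.smul_mem hx s, hsx⟩ :
      s • x ∈ W ⊓ T')⟩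
end

section
/- Let R ⊆ S be a ring extension and suppose that for a subset X of MSupp_R(S/R) there exists a splitter T = σ(X), i.e., an intermediate ring T with MSupp_R(T/R) = X and MSupp_R(S/T) = X^c (the complement of X in MSupp_R(S/R)). Then [R, T] = { U ∈ [R,S] : MSupp_R(U/R) ⊆ X } and [T, S] = { U ∈ [R,S] : MSupp_R(S/U) ∩ X = ∅ }. -/
variable {R S : Type*} [CommRing R] [CommRing S] [Algebra R S]

/-- `T` is the splitter of `R ⊆ S` at `X`: `MSupp(T/R) = X` and `MSupp(S/T)` is the
complement of `X` in `MSupp(S/R)`. -/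
def IsSplitter (T : Subalgebra R S) (X : Set (Ideal R)) : Prop :=
  MSupp (⊥ : Subalgebra R S) T = X ∧
    MSupp T (⊤ : Subalgebra R S) =
      MSupp (⊥ : Subalgebra R S) (⊤ : Subalgebra R S) \ X

/-- For a splitter `T = σ(X)`:
`[R,T] = {U : MSupp(U/R) ⊆ X}` and `[T,S] = {U : MSupp(S/U) ∩ X = ∅}`. -/
theorem interval_of_splitter (T : Subalgebra R S) (X : Set (Ideal R))
    (hX : X ⊆ MSupp (⊥ : Subalgebra R S) (⊤ : Subalgebra R S))
    (hT : IsSplitter T X) :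
    (∀ U : Subalgebra R S, U ≤ T ↔ MSupp (⊥ : Subalgebra R S) U ⊆ X) ∧
    (∀ U : Subalgebra R S, T ≤ U ↔ MSupp U (⊤ : Subalgebra R S) ∩ X = ∅) := by
  obtain ⟨hT1, hT2⟩ := hT
  have key : ∀ (A : Subalgebra R S) (x : S),
      (∀ M : Ideal R, M.IsMaximal → ∃ s ∉ M, s • x ∈ A) → x ∈ A := by
    intro A x h
    let I : Ideal R :=
      { carrier := {s | s • x ∈ A}
        add_mem' := fun {a b} ha hb => by
          simpa [add_smul] using A.add_mem ha hb
        zero_mem' := by simp [A.zero_mem]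
        smul_mem' := fun r s hs => by
          simpa [smul_eq_mul, mul_smul] using A.smul_mem hs r }
    by_cases hI : I = ⊤
    · have h1 : (1 : R) ∈ I := hI ▸ Submodule.mem_top
      have h2 : (1 : R) • x ∈ A := h1
      simpa using h2
    · obtain ⟨M, hM, hIM⟩ := Ideal.exists_le_maximal I hI
      obtain ⟨s, hsM, hsx⟩ := h M hM
      exact absurd (hIM hsx) hsM
  constructor
  · intro U
    constructor
    · intro hUT M hM
      rw [← hT1]
      obtain ⟨hMmax, x, hxU, hx⟩ := hM
      exact ⟨hMmax, x, hUT hxU, hx⟩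
    · intro hsub x hxU
      apply key T x
      intro M hM
      by_contra hc
      push_neg at hc
      have hMT : M ∈ MSupp T (⊤ : Subalgebra R S) :=
        ⟨hM, x, trivial, fun s hs => hc s hs⟩
      have hnX : M ∉ X := (hT2 ▸ hMT).2
      have hMU : M ∈ MSupp (⊥ : Subalgebra R S) U :=
        ⟨hM, x, hxU, fun s hs h => hc s hs ((bot_le : (⊥ : Subalgebra R S) ≤ T) h)⟩
      exact hnX (hsub hMU)
  · intro U
    constructor
    · intro hTU
      rw [Set.eq_empty_iff_forall_notMem]
      rintro M ⟨⟨hMmax, x, hxT, hx⟩, hMX⟩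
      have hMT : M ∈ MSupp T (⊤ : Subalgebra R S) :=
        ⟨hMmax, x, hxT, fun s hs h => hx s hs (hTU h)⟩
      exact (hT2 ▸ hMT).2 hMX
    · intro hdisj x hxT
      apply key U x
      intro M hM
      by_contra hc
      push_neg at hc
      have hMU : M ∈ MSupp U (⊤ : Subalgebra R S) :=
        ⟨hM, x, trivial, fun s hs => hc s hs⟩
      have hMX : M ∈ X := by
        rw [← hT1]
        exact ⟨hM, x, hxT, fun s hs h => hc s hs ((bot_le : (⊥ : Subalgebra R S) ≤ U) h)⟩
      exact Set.eq_empty_iff_forall_notMem.mp hdisj M ⟨hMU, hMX⟩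
end

section
/- Let R ⊆ S be a ring extension and let T, U be intermediate rings that are splitters at subsets X and Y of MSupp_R(S/R) respectively (i.e., MSupp_R(T/R) = X, MSupp_R(S/T) = X^c, MSupp_R(U/R) = Y, MSupp_R(S/U) = Y^c). If X ⊆ Y then T ⊆ U, and conversely if T ⊆ U then X ⊆ Y. -/
variable {R S : Type*} [CommRing R] [CommRing S] [Algebra R S]

/-- For splitters `T = σ(X)` and `U = σ(Y)`: `X ⊆ Y ↔ T ⊆ U`. -/
theorem splitter_mono (T U : Subalgebra R S) (X Y : Set (Ideal R))
    (hX : X ⊆ MSupp (⊥ : Subalgebra R S) (⊤ : Subalgebra R S))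
    (hY : Y ⊆ MSupp (⊥ : Subalgebra R S) (⊤ : Subalgebra R S))
    (hT : IsSplitter T X) (hU : IsSplitter U Y) :
    X ⊆ Y ↔ T ≤ U := by
  obtain ⟨hT1, hT2⟩ := hT
  obtain ⟨hU1, hU2⟩ := hU
  constructor
  · intro hXY t ht
    by_contra htU
    set I : Ideal R :=
      { carrier := {s | s • t ∈ U}
        add_mem' := fun ha hb => by simpa [add_smul] using add_mem ha hb
        zero_mem' := by simpa using U.zero_mem
        smul_mem' := fun c s hs => by simpa [mul_smul] using U.smul_mem hs c } with hIdef
    have hI : I ≠ ⊤ := by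
      intro h
      have h1 : (1 : R) ∈ I := h ▸ Submodule.mem_top
      have : (1 : R) • t ∈ U := h1
      exact htU (by simpa using this)
    obtain ⟨M, hM, hIM⟩ := Ideal.exists_le_maximal I hI
    have hs : ∀ s : R, s ∉ M → s • t ∉ U := fun s hsM hsU => hsM (hIM hsU)
    have hMX : M ∈ X := by
      rw [← hT1]
      exact ⟨hM, t, ht, fun s hsM hb =>
        hs s hsM ((bot_le : (⊥ : Subalgebra R S) ≤ U) hb)⟩
    have hMY : M ∉ Y := by
      have hmem : M ∈ MSupp U (⊤ : Subalgebra R S) := ⟨hM, t, trivial, hs⟩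
      rw [hU2] at hmem
      exact hmem.2
    exact hMY (hXY hMX)
  · intro hTU M hM
    obtain ⟨hMmax, x, hxT, hx⟩ := hT1 ▸ hM
    rw [← hU1]
    exact ⟨hMmax, x, hTU hxT, hx⟩
end

section
/- Let R ⊆ S be a ring extension, and let T and U be splitters at subsets X and Y of MSupp_R(S/R), respectively. If the intersection T ∩ U is a splitter at some subset Z of MSupp_R(S/R), then Z = X ∩ Y; in particular, if X ∩ Y = ∅ and T ∩ U is a splitter, then T ∩ U = R. -/
variable {R S : Type*} [CommRing R] [CommRing S] [Algebra R S]

/-- For splitters `T = σ(X)` and `U = σ(Y)`: if `T ⊓ U` is a splitter at `Z`, then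
`Z = X ∩ Y`; in particular, if `X ∩ Y = ∅` and `T ⊓ U` is a splitter, then `T ⊓ U = R`. -/
theorem splitter_inf (T U : Subalgebra R S) (X Y Z : Set (Ideal R))
    (hX : X ⊆ MSupp (⊥ : Subalgebra R S) (⊤ : Subalgebra R S))
    (hY : Y ⊆ MSupp (⊥ : Subalgebra R S) (⊤ : Subalgebra R S))
    (hZ : Z ⊆ MSupp (⊥ : Subalgebra R S) (⊤ : Subalgebra R S))
    (hT : IsSplitter T X) (hU : IsSplitter U Y)
    (hTU : IsSplitter (T ⊓ U) Z) :
    Z = X ∩ Y ∧ (X ∩ Y = ∅ → T ⊓ U = ⊥) := by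
  obtain ⟨hT1, hT2⟩ := hT
  obtain ⟨hU1, hU2⟩ := hU
  obtain ⟨hZ1, hZ2⟩ := hTU
  have key : Z = X ∩ Y := by
    apply Set.Subset.antisymm
    · rw [← hZ1, ← hT1, ← hU1]
      rintro M ⟨hM, x, hx, h⟩
      exact ⟨⟨hM, x, hx.1, h⟩, ⟨hM, x, hx.2, h⟩⟩
    · rintro M ⟨hMX, hMY⟩
      have hMW := hX hMX
      by_contra hMZ
      have hmem : M ∈ MSupp (T ⊓ U) (⊤ : Subalgebra R S) := by
        rw [hZ2]; exact ⟨hMW, hMZ⟩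
      obtain ⟨hMmax, x, -, h⟩ := hmem
      have hT' : M ∉ MSupp T (⊤ : Subalgebra R S) := by
        rw [hT2]; exact fun hc => hc.2 hMX
      have hU' : M ∉ MSupp U (⊤ : Subalgebra R S) := by
        rw [hU2]; exact fun hc => hc.2 hMY
      obtain ⟨s, hs, hsT⟩ : ∃ s, s ∉ M ∧ s • x ∈ T := by
        by_contra hc
        push_neg at hc
        exact hT' ⟨hMmax, x, trivial, hc⟩
      obtain ⟨s', hs', hsU⟩ : ∃ s', s' ∉ M ∧ s' • (s • x) ∈ U := by
        by_contra hc
        push_neg at hc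
        exact hU' ⟨hMmax, s • x, trivial, hc⟩
      refine h (s' * s) (fun hm => ((hMmax.isPrime.mem_or_mem hm).elim hs' hs)) ?_
      refine ⟨?_, ?_⟩
      · rw [mul_smul]; exact T.smul_mem hsT s'
      · rw [mul_smul]; exact hsU
  refine ⟨key, fun hXY => ?_⟩
  have hZempty : MSupp (⊥ : Subalgebra R S) (T ⊓ U) = (∅ : Set (Ideal R)) := by
    rw [hZ1, key, hXY]
  refine le_antisymm (fun x hx => ?_) bot_le
  by_contra hxbot
  let I : Ideal R :=
    { carrier := {s | s • x ∈ (⊥ : Subalgebra R S)}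
      add_mem' := fun {a b} ha hb => by
        simp only [Set.mem_setOf_eq, add_smul] at *
        exact Subalgebra.add_mem _ ha hb
      zero_mem' := by simp only [Set.mem_setOf_eq, zero_smul]; exact Subalgebra.zero_mem _
      smul_mem' := fun c a ha => by
        simp only [Set.mem_setOf_eq, smul_eq_mul, mul_smul] at *
        exact Subalgebra.smul_mem _ ha c }
  have hIne : I ≠ ⊤ := by
    intro hc
    have : (1 : R) ∈ I := hc ▸ Submodule.mem_top
    simp only [I, Submodule.mem_mk, AddSubmonoid.mem_mk, AddSubsemigroup.mem_mk,
      Set.mem_setOf_eq, one_smul] at this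
    exact hxbot this
  obtain ⟨M, hMmax, hIM⟩ := Ideal.exists_le_maximal I hIne
  have : M ∈ MSupp (⊥ : Subalgebra R S) (T ⊓ U) := by
    refine ⟨hMmax, x, hx, fun s hs hsx => hs (hIM ?_)⟩
    exact hsx
  rw [hZempty] at this
  exact this
end
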